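/- Let G be a countable group acting by measurable maps on a measurable space (Z, 𝔐), ν a G-invariant measure on Z admitting a fundamental domain, and ν_G the quotient measure on (Z/G, 𝔐/G) characterized by ∫_A h dν = ∫_{Z/G} h̄·f̄_A dν_G for all measurable A ⊆ Z and all G-invariant measurable h : Z → [0,∞]. Then for every measurable set A ⊆ Z, the following are equivalent: ν_G(pr(A)) = 0; ν(A) = 0; ν(G·A) = 0. -/

import Mathlib

open MeasureTheory
open scoped ENNReal

/-- The defining property of the quotient measure `ν_G` on `Z/G` (with the quotient
σ-algebra `𝔐/G`): for every measurable `A ⊆ Z` and every `G`-invariant measurable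
`h : Z → [0,∞]`, with `h̄, f̄_A` the functions induced on `Z/G` by `h` and by
`f_A(z) = #{g : g • z ∈ A}`, one has `∫_A h dν = ∫_{Z/G} h̄ · f̄_A dν_G`. -/
def IsQuotientMeasure {G Z : Type*} [Group G] [MulAction G Z] [mZ : MeasurableSpace Z]
    (ν : Measure Z)
    (νG : @Measure (Quotient (MulAction.orbitRel G Z))
      (MeasurableSpace.map (Quotient.mk (MulAction.orbitRel G Z)) mZ)) : Prop :=
  ∀ A : Set Z, MeasurableSet A →
    ∀ h : Z → ℝ≥0∞, Measurable h → (∀ (g : G) (z : Z), h (g • z) = h z) →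
    ∀ hbar fbar : Quotient (MulAction.orbitRel G Z) → ℝ≥0∞,
      (∀ z : Z, hbar (Quotient.mk (MulAction.orbitRel G Z) z) = h z) →
      (∀ z : Z, fbar (Quotient.mk (MulAction.orbitRel G Z) z)
        = ∑' g : G, A.indicator (fun _ => (1 : ℝ≥0∞)) (g • z)) →
      ∫⁻ z in A, h z ∂ν = ∫⁻ q, hbar q * fbar q ∂νG

theorem stmt17 {G Z : Type*} [Group G] [Countable G] [MulAction G Z] [mZ : MeasurableSpace Z]
    (hmeas : ∀ g : G, Measurable fun z : Z => g • z)
    (ν : Measure Z)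
    (hinv : ∀ (g : G) (A : Set Z), MeasurableSet A → ν ((fun z : Z => g • z) ⁻¹' A) = ν A)
    (F : Set Z) (hFm : MeasurableSet F)
    (hFfull : ν ((⋃ g : G, (fun z : Z => g • z) '' F)ᶜ) = 0)
    (hFfin : ∀ z ∈ F, {g : G | g • z ∈ F}.Finite)
    (νG : @Measure (Quotient (MulAction.orbitRel G Z))
      (MeasurableSpace.map (Quotient.mk (MulAction.orbitRel G Z)) mZ))
    (hνG : IsQuotientMeasure ν νG) :
    ∀ A : Set Z, MeasurableSet A →
      ((νG (Quotient.mk (MulAction.orbitRel G Z) '' A) = 0 ↔ ν A = 0) ∧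
        (ν A = 0 ↔ ν (⋃ g : G, (fun z : Z => g • z) '' A) = 0)) := by
  intro A hA
  set S : Set Z := ⋃ g : G, (fun z : Z => g • z) '' A with hSdef
  -- image under g equals preimage under g⁻¹
  have hSim : ∀ g : G, (fun z : Z => g • z) '' A = (fun z : Z => g⁻¹ • z) ⁻¹' A := by
    intro g
    ext z
    constructor
    · rintro ⟨a, ha, rfl⟩
      simpa [Set.mem_preimage, inv_smul_smul] using ha
    · intro h
      exact ⟨g⁻¹ • z, h, by simp [smul_inv_smul]⟩
  have hSmeas : MeasurableSet S := by
    apply MeasurableSet.iUnion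
    intro g
    rw [hSim]
    exact (hmeas g⁻¹) hA
  have hAS : A ⊆ S := fun z hz => Set.mem_iUnion.2 ⟨1, z, hz, one_smul G z⟩
  -- second equivalence
  have hνSA : ν A = 0 ↔ ν S = 0 := by
    constructor
    · intro h0
      refine measure_iUnion_null fun g => ?_
      rw [hSim, hinv g⁻¹ A hA]
      exact h0
    · intro h0
      exact measure_mono_null hAS h0
  -- S is G-invariant
  have hSinv : ∀ (g : G) (z : Z), g • z ∈ S ↔ z ∈ S := by
    intro g z
    constructor
    · rintro hz
      rcases Set.mem_iUnion.1 hz with ⟨h, a, ha, hEq⟩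
      refine Set.mem_iUnion.2 ⟨g⁻¹ * h, a, ha, ?_⟩
      simp only at hEq
      simp [mul_smul, hEq]
    · rintro hz
      rcases Set.mem_iUnion.1 hz with ⟨h, a, ha, hEq⟩
      refine Set.mem_iUnion.2 ⟨g * h, a, ha, ?_⟩
      simp only at hEq
      simp [mul_smul, hEq]
  -- preimage of the projected set is the saturation
  have hpre : Quotient.mk (MulAction.orbitRel G Z) ⁻¹'
      (Quotient.mk (MulAction.orbitRel G Z) '' A) = S := by
    ext z
    constructor
    · rintro ⟨a, ha, hq⟩
      have : a ∈ MulAction.orbit G z := Quotient.exact hq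
      rcases this with ⟨g, hg⟩
      refine Set.mem_iUnion.2 ⟨g⁻¹, a, ha, ?_⟩
      simp only at hg ⊢
      rw [← hg, inv_smul_smul]
    · intro hz
      rcases Set.mem_iUnion.1 hz with ⟨g, a, ha, hEq⟩
      refine ⟨a, ha, ?_⟩
      apply Quotient.sound
      refine ⟨g⁻¹, ?_⟩
      simp only at hEq
      simp [← hEq, inv_smul_smul]
  have hprm : MeasurableSet[MeasurableSpace.map (Quotient.mk (MulAction.orbitRel G Z)) mZ]
      (Quotient.mk (MulAction.orbitRel G Z) '' A) := by
    show MeasurableSet (Quotient.mk (MulAction.orbitRel G Z) ⁻¹'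
      (Quotient.mk (MulAction.orbitRel G Z) '' A))
    rw [hpre]; exact hSmeas
  -- the induced function f̄_S
  set fbar : Quotient (MulAction.orbitRel G Z) → ℝ≥0∞ :=
    fun q => ∑' _ : G, S.indicator (fun _ => (1 : ℝ≥0∞)) q.out with hfbardef
  have hfbar : ∀ z : Z, fbar (Quotient.mk (MulAction.orbitRel G Z) z)
      = ∑' g : G, S.indicator (fun _ => (1 : ℝ≥0∞)) (g • z) := by
    intro z
    have hout : (Quotient.mk (MulAction.orbitRel G Z) z).out ∈ S ↔ z ∈ S := by
      have h1 : (Quotient.mk (MulAction.orbitRel G Z) z).out ∈ MulAction.orbit G z :=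
        Quotient.exact (Quotient.out_eq (Quotient.mk (MulAction.orbitRel G Z) z))
      rcases h1 with ⟨g, hg⟩
      simp only at hg
      rw [← hg]
      exact hSinv g z
    refine tsum_congr fun g => ?_
    have h2 : g • z ∈ S ↔ z ∈ S := hSinv g z
    by_cases hz : z ∈ S
    · rw [Set.indicator_of_mem (hout.2 hz), Set.indicator_of_mem (h2.2 hz)]
    · rw [Set.indicator_of_notMem (fun h => hz (hout.1 h)),
        Set.indicator_of_notMem (fun h => hz (h2.1 h))]
  -- key identity from the defining property of νG
  have key : ν S = ∫⁻ q, fbar q ∂νG := by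
    have := hνG S hSmeas (fun _ => 1) measurable_const (fun _ _ => rfl)
      (fun _ => 1) fbar (fun _ => rfl) hfbar
    simpa [setLIntegral_one] using this
  -- characterization of membership in the projected set via representatives
  have houtmem : ∀ q : Quotient (MulAction.orbitRel G Z),
      q ∈ Quotient.mk (MulAction.orbitRel G Z) '' A ↔ q.out ∈ S := by
    intro q
    constructor
    · intro hq
      have h2 : Quotient.mk (MulAction.orbitRel G Z) q.out
          ∈ Quotient.mk (MulAction.orbitRel G Z) '' A := by
        rw [Quotient.out_eq q]; exact hq
      rw [← hpre]; exact h2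
    · intro hq
      have h2 : Quotient.mk (MulAction.orbitRel G Z) q.out
          ∈ Quotient.mk (MulAction.orbitRel G Z) '' A := by
        show q.out ∈ Quotient.mk (MulAction.orbitRel G Z) ⁻¹'
          (Quotient.mk (MulAction.orbitRel G Z) '' A)
        rw [hpre]; exact hq
      rw [Quotient.out_eq q] at h2
      exact h2
  have hlow : ∀ q, (Quotient.mk (MulAction.orbitRel G Z) '' A).indicator
      (fun _ => (1 : ℝ≥0∞)) q ≤ fbar q := by
    intro q
    by_cases hq : q ∈ Quotient.mk (MulAction.orbitRel G Z) '' A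
    · rw [Set.indicator_of_mem hq]
      have hout : q.out ∈ S := (houtmem q).1 hq
      calc (1 : ℝ≥0∞) = S.indicator (fun _ => (1 : ℝ≥0∞)) q.out := by
            rw [Set.indicator_of_mem hout]
        _ ≤ fbar q := ENNReal.le_tsum (1 : G)
    · rw [Set.indicator_of_notMem hq]; exact zero_le
  have hup : ∀ q, fbar q ≤ (Quotient.mk (MulAction.orbitRel G Z) '' A).indicator
      (fun _ => (⊤ : ℝ≥0∞)) q := by
    intro q
    by_cases hq : q ∈ Quotient.mk (MulAction.orbitRel G Z) '' A
    · rw [Set.indicator_of_mem hq]; exact le_top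
    · rw [Set.indicator_of_notMem hq]
      have hout : q.out ∉ S := fun h => hq ((houtmem q).2 h)
      have h0 : fbar q = 0 := by
        rw [hfbardef]
        simp [Set.indicator_of_notMem hout]
      rw [h0]
  have hlowint : νG (Quotient.mk (MulAction.orbitRel G Z) '' A) ≤ ν S := by
    rw [key]
    calc νG (Quotient.mk (MulAction.orbitRel G Z) '' A)
        = ∫⁻ q, (Quotient.mk (MulAction.orbitRel G Z) '' A).indicator
            (fun _ => (1 : ℝ≥0∞)) q ∂νG := by
          rw [lintegral_indicator_const hprm, one_mul]
      _ ≤ ∫⁻ q, fbar q ∂νG := lintegral_mono hlow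
  have hupint : ν S ≤ ⊤ * νG (Quotient.mk (MulAction.orbitRel G Z) '' A) := by
    rw [key]
    calc ∫⁻ q, fbar q ∂νG
        ≤ ∫⁻ q, (Quotient.mk (MulAction.orbitRel G Z) '' A).indicator
            (fun _ => (⊤ : ℝ≥0∞)) q ∂νG := lintegral_mono hup
      _ = ⊤ * νG (Quotient.mk (MulAction.orbitRel G Z) '' A) :=
          lintegral_indicator_const hprm _
  refine ⟨⟨fun h0 => ?_, fun h0 => ?_⟩, hνSA⟩
  · rw [hνSA]
    have hle : ν S ≤ 0 := by
      calc ν S ≤ ⊤ * νG (Quotient.mk (MulAction.orbitRel G Z) '' A) := hupint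
        _ = 0 := by rw [h0, mul_zero]
    exact le_antisymm hle zero_le
  · have hS0 : ν S = 0 := hνSA.1 h0
    exact le_antisymm (hS0 ▸ hlowint) zero_le
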